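/- The phase point operators are informationally complete: every matrix M : Matrix (ZMod d) (ZMod d) ℂ satisfies M = (1/d) • Σ over u ∈ ZMod d × ZMod d of trace(A_u * M) • A_u. -/

import Mathlib

open Matrix Complex

/-- ω = exp(2πi/d). -/
noncomputable def omegaC (d : ℕ) : ℂ := Complex.exp (2 * Real.pi * Complex.I / d)

/-- The clock matrix `Z`, with `Z x x = ω ^ x.val`. -/
noncomputable def Zmat (d : ℕ) : Matrix (ZMod d) (ZMod d) ℂ :=
  Matrix.diagonal (fun x => omegaC d ^ x.val)

/-- The shift matrix `X`, with `X x y = 1` iff `x = y + 1`. -/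
noncomputable def Xmat (d : ℕ) : Matrix (ZMod d) (ZMod d) ℂ :=
  Matrix.of fun x y => if x = y + 1 then 1 else 0

/-- The Heisenberg–Weyl operator `T_a`. -/
noncomputable def TW (d : ℕ) [NeZero d] (a : ZMod d × ZMod d) : Matrix (ZMod d) (ZMod d) ℂ :=
  omegaC d ^ ((-((2 : ZMod d)⁻¹ * a.1 * a.2)).val) • (Zmat d ^ a.1.val * Xmat d ^ a.2.val)

/-- The phase point operator at the origin, `A_0 = (1/d) • ∑ a, T_a`. -/
noncomputable def Apoint0 (d : ℕ) [NeZero d] : Matrix (ZMod d) (ZMod d) ℂ :=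
  (1 / (d : ℂ)) • ∑ a : ZMod d × ZMod d, TW d a

/-- The phase point operator `A_u = T_u * A_0 * T_uᴴ`. -/
noncomputable def Apoint (d : ℕ) [NeZero d] (u : ZMod d × ZMod d) : Matrix (ZMod d) (ZMod d) ℂ :=
  TW d u * Apoint0 d * (TW d u)ᴴ

section PPhelpers

section helpers
variable (d : ℕ) [NeZero d]

noncomputable def ee (n : ZMod d) : ℂ := omegaC d ^ n.val

lemma homega : IsPrimitiveRoot (omegaC d) d := Complex.isPrimitiveRoot_exp d (NeZero.ne d)

lemma omega_pow_d : omegaC d ^ d = 1 := (homega d).pow_eq_one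

lemma ee_natCast (n : ℕ) : ee d (n : ZMod d) = omegaC d ^ n := by
  unfold ee
  rw [ZMod.val_natCast]
  conv_rhs => rw [← Nat.div_add_mod n d]
  rw [pow_add, pow_mul, omega_pow_d, one_pow, one_mul]

lemma natCast_val' (a : ZMod d) : ((a.val : ℕ) : ZMod d) = a := ZMod.natCast_rightInverse a

lemma ee_add (a b : ZMod d) : ee d (a + b) = ee d a * ee d b := by
  have h : ((a.val + b.val : ℕ) : ZMod d) = a + b := by
    push_cast [natCast_val']; try rfl
  rw [← h, ee_natCast, pow_add]; rfl

lemma ee_zero : ee d 0 = 1 := by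
  have : ((0:ℕ) : ZMod d) = 0 := by norm_num
  rw [← this, ee_natCast, pow_zero]

lemma ee_mul (a b : ZMod d) : ee d (a * b) = omegaC d ^ (a.val * b.val) := by
  have h : ((a.val * b.val : ℕ) : ZMod d) = a * b := by push_cast [natCast_val']; try rfl
  rw [← h, ee_natCast]

lemma ee_neg_mul (a : ZMod d) : ee d (-a) * ee d a = 1 := by
  rw [← ee_add, neg_add_cancel, ee_zero]

lemma ee_conj (a : ZMod d) : (starRingEnd ℂ) (ee d a) = ee d (-a) := by
  have habs : ‖ee d a‖ = 1 := by
    unfold ee omegaC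
    rw [norm_pow]
    have : ‖Complex.exp (2 * Real.pi * Complex.I / d)‖ = 1 := by
      rw [Complex.norm_exp]
      have : (2 * ↑Real.pi * Complex.I / ↑d).re = 0 := by
        simp [Complex.div_re, Complex.mul_re]
      rw [this, Real.exp_zero]
    rw [this, one_pow]
  have h1 : (starRingEnd ℂ) (ee d a) * ee d a = 1 := by
    rw [mul_comm, Complex.mul_conj, ← Complex.sq_norm, habs]; norm_num
  have h2 := ee_neg_mul d a
  have hne : ee d a ≠ 0 := by
    intro h; rw [h] at habs; simp at habs
  have := mul_right_cancel₀ hne (h1.trans h2.symm)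
  exact this

lemma ee_star (a : ZMod d) : star (ee d a) = ee d (-a) := ee_conj d a

lemma sum_ee (c : ZMod d) : ∑ a : ZMod d, ee d (a * c) = if c = 0 then (d : ℂ) else 0 := by
  split_ifs with hc
  · subst hc; simp [ee_zero, Finset.card_univ]
  · have hsum : ∑ a : ZMod d, ee d (a * c) = ∑ i ∈ Finset.range d, (omegaC d ^ c.val) ^ i := by
      apply Finset.sum_nbij' (fun (a : ZMod d) => a.val) (fun (i : ℕ) => (i : ZMod d)) <;>
        intros <;>
        simp_all [ZMod.val_lt, natCast_val', ZMod.val_natCast_of_lt, ee_mul, mul_comm, pow_mul, Nat.mod_eq_of_lt]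
    rw [hsum]
    have hne1 : omegaC d ^ c.val ≠ 1 := by
      apply (homega d).pow_ne_one_of_pos_of_lt
      · exact (fun (h : c.val = 0) => hc (by rw [← natCast_val' d c, h]; simp))
      · exact ZMod.val_lt c
    rw [geom_sum_eq hne1, ← pow_mul, mul_comm c.val d, pow_mul, omega_pow_d, one_pow]
    simp

end helpers

section matrices
variable (d : ℕ) [NeZero d]

lemma Xpow_apply (k : ℕ) (x y : ZMod d) :
    (Xmat d ^ k) x y = if x = y + (k : ZMod d) then 1 else 0 := by
  induction k generalizing y with
  | zero => simp [Matrix.one_apply, eq_comm]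
  | succ n ih =>
    rw [pow_succ, Matrix.mul_apply]
    have : ∀ z : ZMod d, (Xmat d ^ n) x z * Xmat d z y
        = if z = y + 1 then (if x = y + 1 + (n : ZMod d) then 1 else 0) else 0 := by
      intro z
      rw [ih, Xmat]
      by_cases h : z = y + 1 <;> simp [h]
    rw [Finset.sum_congr rfl (fun z _ => this z), Finset.sum_ite_eq' Finset.univ (y+1)]
    have hc : (y + 1 + (n : ZMod d)) = y + ((n : ℕ) + 1 : ℕ) := by push_cast; ring
    simp [hc]

lemma Zpow_mul_Xpow_apply (j k : ℕ) (x y : ZMod d) :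
    (Zmat d ^ j * Xmat d ^ k) x y
      = if x = y + (k : ZMod d) then omegaC d ^ (j * x.val) else 0 := by
  rw [Matrix.mul_apply]
  have hz : ∀ z : ZMod d, (Zmat d ^ j) x z * (Xmat d ^ k) z y
      = if z = x then (omegaC d ^ (j * x.val)) * (if x = y + (k : ZMod d) then 1 else 0) else 0 := by
    intro z
    rw [Zmat, Matrix.diagonal_pow, Matrix.diagonal_apply, Xpow_apply]
    by_cases h : x = z <;> simp [h, eq_comm, Pi.pow_apply, mul_comm j, pow_mul]
  rw [Finset.sum_congr rfl (fun z _ => hz z), Finset.sum_ite_eq' Finset.univ x]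
  by_cases h : x = y + (k : ZMod d) <;> simp [h]

end matrices

section ops
variable (d : ℕ) [NeZero d]

lemma TW_apply (a : ZMod d × ZMod d) (x y : ZMod d) :
    TW d a x y = if x = y + a.2 then ee d (-((2 : ZMod d)⁻¹ * a.1 * a.2) + a.1 * x) else 0 := by
  rw [TW, Matrix.smul_apply, Zpow_mul_Xpow_apply, natCast_val']
  by_cases h : x = y + a.2
  · rw [if_pos h, if_pos h, ee_add, ← ee_mul]
    rfl
  · simp [h]

variable (hodd : Odd d)
include hodd

lemma two_unit : ((2 : ZMod d)⁻¹ * 2 = 1) := by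
  apply ZMod.inv_mul_of_unit
  have : ((2 : ℕ) : ZMod d) = (2 : ZMod d) := by push_cast; rfl
  rw [← this]
  rw [ZMod.isUnit_iff_coprime, Nat.Prime.coprime_iff_not_dvd Nat.prime_two]
  exact fun hdvd => (Nat.not_even_iff_odd.mpr hodd) (even_iff_two_dvd.mpr hdvd)

lemma two_cancel {a b : ZMod d} (h : 2 * a = 2 * b) : a = b := by
  have h2 := two_unit d hodd
  calc a = (2:ZMod d)⁻¹ * 2 * a := by rw [h2, one_mul]
    _ = (2:ZMod d)⁻¹ * (2 * b) := by rw [mul_assoc, h]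
    _ = b := by rw [← mul_assoc, h2, one_mul]

lemma Apoint0_apply (x y : ZMod d) :
    Apoint0 d x y = if x = -y then 1 else 0 := by
  have h2 := two_unit d hodd
  rw [Apoint0, Matrix.smul_apply, Matrix.sum_apply, Fintype.sum_prod_type]
  have step1 : ∀ a1 : ZMod d, ∑ a2 : ZMod d, TW d (a1, a2) x y
      = ee d (a1 * ((2:ZMod d)⁻¹ * (x + y))) := by
    intro a1
    have : ∀ a2 : ZMod d, TW d (a1, a2) x y
        = if a2 = x - y then ee d (-((2 : ZMod d)⁻¹ * a1 * a2) + a1 * x) else 0 := by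
      intro a2
      rw [TW_apply]
      refine if_congr ⟨fun h => by rw [h]; ring, fun h => by rw [h]; ring⟩ rfl rfl
    rw [Finset.sum_congr rfl (fun a2 _ => this a2), Finset.sum_ite_eq' Finset.univ (x - y)]
    simp only [Finset.mem_univ, if_true]
    congr 1
    linear_combination (-(a1 * x)) * h2
  rw [Finset.sum_congr rfl (fun a1 _ => step1 a1), sum_ee]
  have hiff : ((2:ZMod d)⁻¹ * (x + y) = 0) ↔ (x = -y) := by
    constructor
    · intro h
      have : (2:ZMod d) * ((2:ZMod d)⁻¹ * (x + y)) = 2 * 0 := by rw [h]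
      rw [← mul_assoc, mul_comm (2:ZMod d), h2, one_mul, mul_zero] at this
      linear_combination this
    · intro h; rw [h]; ring
  have hd0 : (d : ℂ) ≠ 0 := Nat.cast_ne_zero.mpr (NeZero.ne d)
  by_cases h : x = -y
  · rw [if_pos (by rw [hiff]; exact h), if_pos h]
    rw [smul_eq_mul, one_div, inv_mul_cancel₀ hd0]
  · rw [if_neg (by rw [hiff]; exact h), if_neg h, smul_zero]

end ops

section ops2
variable (d : ℕ) [NeZero d] (hodd : Odd d)
include hodd

lemma Apoint_apply (u : ZMod d × ZMod d) (x y : ZMod d) :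
    Apoint d u x y = if x + y = 2 * u.2 then ee d (u.1 * (x - y)) else 0 := by
  rw [Apoint, Matrix.mul_apply]
  have col : ∀ q : ZMod d, (TW d u * Apoint0 d) x q
      = if q = u.2 - x then ee d (-((2 : ZMod d)⁻¹ * u.1 * u.2) + u.1 * x) else 0 := by
    intro q
    rw [Matrix.mul_apply]
    have : ∀ p : ZMod d, TW d u x p * Apoint0 d p q
        = if p = x - u.2 then (ee d (-((2 : ZMod d)⁻¹ * u.1 * u.2) + u.1 * x) *
            (if x - u.2 = -q then 1 else 0)) else 0 := by
      intro p
      rw [TW_apply, Apoint0_apply d hodd]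
      by_cases h : p = x - u.2
      · rw [if_pos h, if_pos (by rw [h]; ring), h]
      · rw [if_neg h, if_neg (fun hh => h (by rw [hh]; ring)), zero_mul]
    rw [Finset.sum_congr rfl (fun p _ => this p), Finset.sum_ite_eq' Finset.univ (x - u.2)]
    simp only [Finset.mem_univ, if_true]
    by_cases h : q = u.2 - x
    · rw [if_pos (by rw [h]; ring), if_pos h, mul_one]
    · rw [if_neg (fun hh => h (by linear_combination hh)), if_neg h, mul_zero]
  have term : ∀ q : ZMod d, (TW d u * Apoint0 d) x q * (TW d u)ᴴ q y
      = if q = u.2 - x then (if x + y = 2 * u.2 then ee d (u.1 * (x - y)) else 0) else 0 := by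
    intro q
    rw [col q, Matrix.conjTranspose_apply, TW_apply]
    by_cases h : q = u.2 - x
    · rw [if_pos h, if_pos h, h]
      by_cases h2 : y = u.2 - x + u.2
      · rw [if_pos h2, if_pos (by rw [h2]; ring), ee_star, ← ee_add]
        congr 1
        rw [h2]; ring
      · rw [if_neg h2, if_neg (fun hh => h2 (by linear_combination hh)), star_zero, mul_zero]
    · rw [if_neg h, if_neg h, zero_mul]
  rw [Finset.sum_congr rfl (fun q _ => term q), Finset.sum_ite_eq' Finset.univ (u.2 - x)]
  simp

lemma trace_Apoint_mul (u : ZMod d × ZMod d) (M : Matrix (ZMod d) (ZMod d) ℂ) :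
    (Apoint d u * M).trace = ∑ p : ZMod d, ee d (u.1 * (2 * p - 2 * u.2)) * M (2 * u.2 - p) p := by
  have : ∀ p : ZMod d, (Apoint d u * M) p p
      = ee d (u.1 * (2 * p - 2 * u.2)) * M (2 * u.2 - p) p := by
    intro p
    rw [Matrix.mul_apply]
    have : ∀ q : ZMod d, Apoint d u p q * M q p
        = if q = 2 * u.2 - p then ee d (u.1 * (2 * p - 2 * u.2)) * M (2 * u.2 - p) p else 0 := by
      intro q
      rw [Apoint_apply d hodd]
      by_cases h : q = 2 * u.2 - p
      · rw [if_pos h, if_pos (by rw [h]; ring), h]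
        congr 2
        ring
      · rw [if_neg h, if_neg (fun hh => h (by linear_combination hh)), zero_mul]
    rw [Finset.sum_congr rfl (fun q _ => this q), Finset.sum_ite_eq' Finset.univ (2 * u.2 - p)]
    simp
  rw [Matrix.trace]
  exact Finset.sum_congr rfl (fun p _ => by rw [Matrix.diag_apply, this p])

end ops2

end PPhelpers

/-- The phase point operators are informationally complete. -/
theorem phase_point_informationally_complete (d : ℕ) [NeZero d] (hodd : Odd d) (hd : 1 < d)
    (M : Matrix (ZMod d) (ZMod d) ℂ) :
    M = (1 / (d : ℂ)) • ∑ u : ZMod d × ZMod d, (Apoint d u * M).trace • Apoint d u := by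
  have h2 := two_unit d hodd
  have hd0 : (d : ℂ) ≠ 0 := Nat.cast_ne_zero.mpr (NeZero.ne d)
  ext x y
  rw [Matrix.smul_apply, Matrix.sum_apply]
  simp only [Matrix.smul_apply, smul_eq_mul]
  rw [Fintype.sum_prod_type]
  set s := x + y with hs
  have hss : 2 * ((2:ZMod d)⁻¹ * s) = s := by linear_combination s * h2
  have hcol : ∀ u1 : ZMod d,
      ∑ u2 : ZMod d, (Apoint d (u1, u2) * M).trace * Apoint d (u1, u2) x y
      = (∑ p : ZMod d, ee d (u1 * (2 * p - s)) * M (s - p) p) * ee d (u1 * (x - y)) := by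
    intro u1
    have hval : ∀ u2 : ZMod d, (Apoint d (u1, u2) * M).trace * Apoint d (u1, u2) x y
        = if u2 = (2:ZMod d)⁻¹ * s
          then (∑ p : ZMod d, ee d (u1 * (2 * p - s)) * M (s - p) p) * ee d (u1 * (x - y))
          else 0 := by
      intro u2
      rw [Apoint_apply d hodd, trace_Apoint_mul d hodd]
      simp only
      by_cases h : u2 = (2:ZMod d)⁻¹ * s
      · have h2u : 2 * u2 = s := by rw [h, hss]
        rw [if_pos h, if_pos (by rw [h2u]), h2u]
      · rw [if_neg (fun hc : s = 2 * u2 => h (two_cancel d hodd (hss.trans hc)).symm), mul_zero,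
          if_neg h]
    rw [Finset.sum_congr rfl (fun u2 _ => hval u2), Finset.sum_ite_eq' Finset.univ ((2:ZMod d)⁻¹ * s)]
    simp
  rw [Finset.sum_congr rfl (fun u1 _ => hcol u1)]
  have hswap : ∀ u1 p : ZMod d, ee d (u1 * (2 * p - s)) * M (s - p) p * ee d (u1 * (x - y))
      = M (s - p) p * ee d (u1 * (2 * p - 2 * y)) := by
    intro u1 p
    rw [mul_comm (ee d _) (M _ _), mul_assoc, ← ee_add]
    congr 2
    rw [hs]; ring
  have step : ∑ u1 : ZMod d, (∑ p : ZMod d, ee d (u1 * (2 * p - s)) * M (s - p) p) * ee d (u1 * (x - y))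
      = ∑ p : ZMod d, M (s - p) p * ∑ u1 : ZMod d, ee d (u1 * (2 * p - 2 * y)) := by
    rw [Finset.sum_congr rfl (fun u1 _ => Finset.sum_mul _ _ _), Finset.sum_comm]
    exact Finset.sum_congr rfl (fun p _ => by
      rw [Finset.mul_sum]
      exact Finset.sum_congr rfl (fun u1 _ => hswap u1 p))
  rw [step]
  have hlast : ∀ p : ZMod d, M (s - p) p * ∑ u1 : ZMod d, ee d (u1 * (2 * p - 2 * y))
      = if p = y then M (s - p) p * d else 0 := by
    intro p
    rw [sum_ee]
    by_cases h : p = y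
    · rw [if_pos h, if_pos (by rw [h]; ring)]
    · rw [if_neg h, if_neg (fun hc => h (two_cancel d hodd (by linear_combination hc))), mul_zero]
  rw [Finset.sum_congr rfl (fun p _ => hlast p), Finset.sum_ite_eq' Finset.univ y]
  simp only [Finset.mem_univ, if_true, hs]
  rw [add_sub_cancel_right]
  field_simp
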